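/- Let 𝒮 be a split system on {1,…,n} in which every split is circular with respect to the identity circular ordering, let λ_S ≥ 0 for S ∈ 𝒮, and let δ_𝒮 = Σ_{S∈𝒮} λ_S δ_S. Then for all indices i < j < k < l: δ_𝒮(i,k) + δ_𝒮(j,l) − δ_𝒮(i,j) − δ_𝒮(k,l) = 2·Σ λ_S, where the sum on the right is over all splits S = {A,B} ∈ 𝒮 with i,j ∈ A and k,l ∈ B. -/
import Mathlib


/-- A split `S = {A,B}` of `X = {1,…,n}` (modeled as `Fin n`): a partition of
`X` into two nonempty blocks. -/
structure Split (n : ℕ) where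
  A : Finset (Fin n)
  B : Finset (Fin n)
  hA : A.Nonempty
  hB : B.Nonempty
  hdisj : Disjoint A B
  hcover : A ∪ B = Finset.univ

/-- The split pseudometric `δ_S`: `δ_S(x,y) = 0` if `x,y` lie in the same
block of `S` and `1` otherwise. -/
noncomputable def splitMetric {n : ℕ} (S : Split n) (x y : Fin n) : ℝ :=
  if x ∈ S.A ↔ y ∈ S.A then 0 else 1

/-- A split is circular with respect to the identity circular ordering if one
of its blocks is of the form `{i+1, i+2, …, j}` (i.e. `Ioc i j`) for some
`i < j`. -/
def IsCircularSplit {n : ℕ} (S : Split n) : Prop :=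
  ∃ i j : Fin n, i < j ∧ (S.A = Finset.Ioc i j ∨ S.B = Finset.Ioc i j)

/-- The elements `i,j` lie in one block of the split `S = {A,B}` and `k,l` in
the other. -/
def SeparatesPairs {n : ℕ} (S : Split n) (i j k l : Fin n) : Prop :=
  (i ∈ S.A ∧ j ∈ S.A ∧ k ∈ S.B ∧ l ∈ S.B) ∨
  (i ∈ S.B ∧ j ∈ S.B ∧ k ∈ S.A ∧ l ∈ S.A)

open scoped Classical

lemma mem_B_iff {n : ℕ} (S : Split n) (x : Fin n) : x ∈ S.B ↔ ¬ x ∈ S.A := by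
  constructor
  · intro hB hA
    exact (Finset.disjoint_left.mp S.hdisj) hA hB
  · intro hA
    have : x ∈ S.A ∪ S.B := by rw [S.hcover]; exact Finset.mem_univ x
    rcases Finset.mem_union.mp this with h | h
    · exact absurd h hA
    · exact h

lemma key_split {n : ℕ} (S : Split n) (hS : IsCircularSplit S)
    (i j k l : Fin n) (hij : i < j) (hjk : j < k) (hkl : k < l) :
    splitMetric S i k + splitMetric S j l - splitMetric S i j - splitMetric S k l =
      if SeparatesPairs S i j k l then 2 else 0 := by
  obtain ⟨a, b, hab, hcase⟩ := hS
  set P : Fin n → Prop := fun x => x ∈ Finset.Ioc a b with hP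
  set Q : Fin n → Prop := fun x => x ∈ S.A with hQ
  have hconv : ∀ x y z : Fin n, x < y → y < z → P x → P z → P y := by
    intro x y z hxy hyz hx hz
    simp only [hP, Finset.mem_Ioc] at *
    exact ⟨hx.1.trans hxy, le_trans (le_of_lt hyz) hz.2⟩
  have hQP : (∀ x, Q x ↔ P x) ∨ (∀ x, Q x ↔ ¬ P x) := by
    rcases hcase with h | h
    · left; intro x; simp [hQ, hP, h]
    · right; intro x
      have hb := mem_B_iff S x
      rw [h] at hb
      simp only [hQ, hP]
      tauto
  have h1 : ¬(Q i ∧ ¬ Q j ∧ Q k ∧ ¬ Q l) := by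
    rintro ⟨hi, hj, hk, hl⟩
    rcases hQP with hq | hq
    · exact hj ((hq j).mpr (hconv i j k hij hjk ((hq i).mp hi) ((hq k).mp hk)))
    · have pj : P j := not_not.mp fun h => hj ((hq j).mpr h)
      have pl : P l := not_not.mp fun h => hl ((hq l).mpr h)
      exact ((hq k).mp hk) (hconv j k l hjk hkl pj pl)
  have h2 : ¬(¬ Q i ∧ Q j ∧ ¬ Q k ∧ Q l) := by
    rintro ⟨hi, hj, hk, hl⟩
    rcases hQP with hq | hq
    · exact hk ((hq k).mpr (hconv j k l hjk hkl ((hq j).mp hj) ((hq l).mp hl)))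
    · have pi : P i := not_not.mp fun h => hi ((hq i).mpr h)
      have pk : P k := not_not.mp fun h => hk ((hq k).mpr h)
      exact ((hq j).mp hj) (hconv i j k hij hjk pi pk)
  have hsep : SeparatesPairs S i j k l ↔
      ((Q i ∧ Q j ∧ ¬ Q k ∧ ¬ Q l) ∨ (¬ Q i ∧ ¬ Q j ∧ Q k ∧ Q l)) := by
    simp only [SeparatesPairs, mem_B_iff, hQ]
  simp only [splitMetric, hsep, hQ]
  simp only [hQ] at h1 h2
  by_cases hi : i ∈ S.A <;> by_cases hj : j ∈ S.A <;> by_cases hk : k ∈ S.A <;>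
    by_cases hl : l ∈ S.A <;> simp_all <;> norm_num

open scoped Classical in
/-- let `δ_𝒮 = Σ_{S∈𝒮} λ_S δ_S` with every `S ∈ 𝒮` circular with
respect to the identity circular ordering and `λ_S ≥ 0`.  Then for all
`i < j < k < l`:
`δ_𝒮(i,k) + δ_𝒮(j,l) − δ_𝒮(i,j) − δ_𝒮(k,l) = 2·Σ λ_S`,
the sum being over all splits `S = {A,B} ∈ 𝒮` with `i,j ∈ A` and `k,l ∈ B`. -/
theorem kalmanson_gap_eq_twice_separating_weight {n : ℕ}
    (𝒮 : Finset (Split n)) (w : Split n → ℝ)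
    (hcirc : ∀ S ∈ 𝒮, IsCircularSplit S) (hw : ∀ S ∈ 𝒮, 0 ≤ w S)
    (δ : Fin n → Fin n → ℝ)
    (hδ : ∀ x y, δ x y = ∑ S ∈ 𝒮, w S * splitMetric S x y) :
    ∀ i j k l : Fin n, i < j → j < k → k < l →
      δ i k + δ j l - δ i j - δ k l =
        2 * ∑ S ∈ 𝒮.filter (fun S => SeparatesPairs S i j k l), w S := by
  intro i j k l hij hjk hkl
  rw [hδ, hδ, hδ, hδ, ← Finset.sum_add_distrib, ← Finset.sum_sub_distrib,
    ← Finset.sum_sub_distrib, Finset.mul_sum, Finset.sum_filter]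
  apply Finset.sum_congr rfl
  intro S hS
  have := key_split S (hcirc S hS) i j k l hij hjk hkl
  rw [show w S * splitMetric S i k + w S * splitMetric S j l - w S * splitMetric S i j
      - w S * splitMetric S k l = w S *
      (splitMetric S i k + splitMetric S j l - splitMetric S i j - splitMetric S k l) by ring,
    this]
  by_cases h : SeparatesPairs S i j k l <;> simp [h] <;> ring
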